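/- Let W be an Asplund generated real Banach space, i.e., W is the closed linear span of a bounded set N ⊆ W such that the pseudometric d_N fragments the dual unit ball (B_{W*}, weak*). If V is a closed subspace of W whose density character is less than 𝔟, then V is Asplund generated: there exists a bounded set M ⊆ V whose closed linear span is V and such that d_M fragments (B_{V*}, weak*). -/

import Mathlib

open Set Topology Cardinal

/-- A map `f : X × X → ℝ` fragments the topological space `X` if for every nonempty
subset `L` of `X` and every `ε > 0` there is a nonempty relatively open subset of `L`
of `f`-diameter less than `ε`. -/
def Fragments {X : Type*} [TopologicalSpace X] (f : X → X → ℝ) : Prop :=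
  ∀ L : Set X, L.Nonempty → ∀ ε : ℝ, 0 < ε →
    ∃ V : Set X, IsOpen V ∧ (V ∩ L).Nonempty ∧
      ∀ x ∈ V ∩ L, ∀ y ∈ V ∩ L, f x y < ε

/-- `f` (defined on the ambient space `X`) fragments the subset `K`. -/
def FragmentsOn {X : Type*} [TopologicalSpace X] (f : X → X → ℝ) (K : Set X) : Prop :=
  ∀ L : Set X, L ⊆ K → L.Nonempty → ∀ ε : ℝ, 0 < ε →
    ∃ V : Set X, IsOpen V ∧ (V ∩ L).Nonempty ∧
      ∀ x ∈ V ∩ L, ∀ y ∈ V ∩ L, f x y < ε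

/-- A quasi metric: nonnegative, symmetric, and vanishing exactly on the diagonal. -/
def IsQuasiMetric {X : Type*} (f : X → X → ℝ) : Prop :=
  (∀ x y, 0 ≤ f x y) ∧ (∀ x y, f x y = f y x) ∧ (∀ x y, f x y = 0 ↔ x = y)

/-- A metric (as a two-variable real function): symmetric, vanishing exactly on the
diagonal, and satisfying the triangle inequality. -/
def IsMetricFun {X : Type*} (d : X → X → ℝ) : Prop :=
  (∀ x y, d x y = d y x) ∧ (∀ x y, d x y = 0 ↔ x = y) ∧
    (∀ x y z, d x z ≤ d x y + d y z)

/-- Lower semicontinuity of a two-variable map for the product topology. -/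
def LSC {X : Type*} [TopologicalSpace X] (f : X → X → ℝ) : Prop :=
  LowerSemicontinuous (fun p : X × X => f p.1 p.2)

/-- A subset of `ℕ → ℕ` is σ-bounded (for the pointwise order) if it is a countable
union of order-bounded sets. -/
def SigmaBounded (S : Set (ℕ → ℕ)) : Prop :=
  ∃ B : ℕ → Set (ℕ → ℕ), S ⊆ (⋃ n, B n) ∧ ∀ n, ∃ τ : ℕ → ℕ, ∀ σ ∈ B n, σ ≤ τ

/-- The cardinal `𝔟`: the least cardinality of a subset of `ℕ → ℕ` which is not
σ-bounded for the pointwise order. -/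
noncomputable def cardinalB : Cardinal :=
  sInf { c | ∃ S : Set (ℕ → ℕ), ¬ SigmaBounded S ∧ #S = c }

/-- The density character of a topological space: the least cardinality of a dense subset. -/
noncomputable def densChar (V : Type u) [TopologicalSpace V] : Cardinal.{u} :=
  sInf { c | ∃ s : Set V, Dense s ∧ #s = c }

/-- The closed unit ball of the dual of `V`, carrying the weak* topology. -/
def dualBall (V : Type u) [NormedAddCommGroup V] [NormedSpace ℝ V] : Set (WeakDual ℝ V) :=
  {φ : WeakDual ℝ V | ∀ x : V, |φ x| ≤ ‖x‖}

/-- The pseudometric `d_M` on the dual unit ball induced by a set `M ⊆ V`: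
`d_M(x*, y*) = sup_{x ∈ M} |x*(x) - y*(x)|`. -/
noncomputable def dM {V : Type u} [NormedAddCommGroup V] [NormedSpace ℝ V] (M : Set V)
    (φ ψ : dualBall V) : ℝ :=
  ⨆ x : M, |(φ : WeakDual ℝ V) x - (ψ : WeakDual ℝ V) x|

/-- `V` is Asplund generated: it is the closed linear span of a bounded set `M` such that
`d_M` fragments the weak* dual unit ball. -/
def AsplundGenerated (V : Type u) [NormedAddCommGroup V] [NormedSpace ℝ V] : Prop :=
  ∃ M : Set V, Bornology.IsBounded M ∧
    (Submodule.span ℝ M).topologicalClosure = ⊤ ∧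
    Fragments (dM M)

section AuxForStatement9

universe u

lemma exists_minimal_closed_map_eq {X Y : Type*} [TopologicalSpace X] [CompactSpace X]
    [TopologicalSpace Y] [T1Space Y] {g : X → Y} (hg : Continuous g)
    {C₀ : Set X} (h₀ : IsClosed C₀) :
    ∃ C, C ⊆ C₀ ∧ IsClosed C ∧ g '' C = g '' C₀ ∧
      ∀ C', C' ⊆ C → IsClosed C' → g '' C' = g '' C₀ → C' = C := by
  set S : Set (Set X) := {C | C ⊆ C₀ ∧ IsClosed C ∧ g '' C = g '' C₀} with hS
  have hzorn : ∃ m, m ⊆ C₀ ∧ Minimal (· ∈ S) m := by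
    refine zorn_superset_nonempty S ?_ C₀ ⟨le_rfl, h₀, rfl⟩
    intro c hcS hchain hcne
    refine ⟨⋂₀ c, ⟨?_, ?_, ?_⟩, fun s hs => sInter_subset_of_mem hs⟩
    · obtain ⟨s, hs⟩ := hcne; exact (sInter_subset_of_mem hs).trans (hcS hs).1
    · exact isClosed_sInter fun s hs => (hcS hs).2.1
    · apply subset_antisymm
      · obtain ⟨s, hs⟩ := hcne
        rw [← (hcS hs).2.2]; exact image_mono (sInter_subset_of_mem hs)
      · rintro y ⟨x, hx, rfl⟩
        haveI : Nonempty c := hcne.to_subtype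
        have key : (⋂ s : c, ((s : Set X) ∩ g ⁻¹' {g x})).Nonempty := by
          apply IsCompact.nonempty_iInter_of_directed_nonempty_isCompact_isClosed
          · rintro ⟨s, hs⟩ ⟨t, ht⟩
            rcases hchain.total hs ht with h | h
            · exact ⟨⟨s, hs⟩, Subset.rfl, inter_subset_inter_left _ h⟩
            · exact ⟨⟨t, ht⟩, inter_subset_inter_left _ h, Subset.rfl⟩
          · rintro ⟨s, hs⟩
            have : g x ∈ g '' s := by rw [(hcS hs).2.2]; exact ⟨x, hx, rfl⟩
            obtain ⟨z, hz, hz'⟩ := this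
            exact ⟨z, hz, by simpa using hz'⟩
          · rintro ⟨s, hs⟩
            exact (((hcS hs).2.1).inter (isClosed_singleton.preimage hg)).isCompact
          · rintro ⟨s, hs⟩
            exact ((hcS hs).2.1).inter (isClosed_singleton.preimage hg)
        obtain ⟨z, hz⟩ := key
        have hz1 : z ∈ ⋂₀ c := by
          rw [mem_sInter]; intro t ht
          exact (mem_iInter.mp hz ⟨t, ht⟩).1
        have hz2 : g z = g x := by
          have := (mem_iInter.mp hz ⟨_, hcne.choose_spec⟩).2
          simpa using this
        exact ⟨z, hz1, hz2⟩
  obtain ⟨m, -, hmS, hmin⟩ := hzorn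
  exact ⟨m, hmS.1, hmS.2.1, hmS.2.2, fun C' h1 h2 h3 =>
    subset_antisymm h1 (hmin ⟨h1.trans hmS.1, h2, h3⟩ h1)⟩

lemma fragments_of_quotient {X Y : Type*} [TopologicalSpace X] [CompactSpace X]
    [TopologicalSpace Y] [T2Space Y] {g : X → Y} (hg : Continuous g)
    (hsurj : Function.Surjective g) {dX : X → X → ℝ} {dY : Y → Y → ℝ}
    (hX : Fragments dX)
    (key : ∀ ε : ℝ, 0 < ε → ∃ δ : ℝ, 0 < δ ∧
      ∀ x x' : X, dX x x' < δ → dY (g x) (g x') < ε) :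
    Fragments dY := by
  intro L hL ε hε
  obtain ⟨δ, hδ, hkey⟩ := key ε hε
  set F := closure L with hF
  have hFc : IsClosed F := isClosed_closure
  obtain ⟨C, hCsub, hCcl, hCim, hCmin⟩ := exists_minimal_closed_map_eq hg (hFc.preimage hg)
  have hgpre : g '' (g ⁻¹' F) = F := Set.image_preimage_eq F hsurj
  rw [hgpre] at hCim hCmin
  have hCne : C.Nonempty := by
    obtain ⟨y, hy⟩ := hL
    have hyF : y ∈ F := subset_closure hy
    rw [← hCim] at hyF
    obtain ⟨x, hx, -⟩ := hyF
    exact ⟨x, hx⟩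
  obtain ⟨U, hUo, hUC, hUsmall⟩ := hX C hCne δ hδ
  set G := g '' (C \ U) with hG
  have hGcl : IsClosed G := (((hCcl.sdiff hUo)).isCompact.image hg).isClosed
  have hGne : G ≠ F := by
    intro h
    have heq : C \ U = C := hCmin _ diff_subset (hCcl.sdiff hUo) h
    obtain ⟨x, hxU, hxC⟩ := hUC
    rw [← heq] at hxC; exact hxC.2 hxU
  have hGsub : G ⊆ F := by rw [← hCim]; exact image_mono diff_subset
  obtain ⟨p, hpF, hpG⟩ : ∃ p, p ∈ F ∧ p ∉ G := by
    by_contra h; push_neg at h; exact hGne (subset_antisymm hGsub h)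
  have hlift : ∀ y ∈ Gᶜ ∩ L, ∃ x ∈ U ∩ C, g x = y := by
    intro y hy
    have hyF : y ∈ F := subset_closure hy.2
    rw [← hCim] at hyF
    obtain ⟨x, hxC, rfl⟩ := hyF
    refine ⟨x, ⟨?_, hxC⟩, rfl⟩
    by_contra hxU
    exact hy.1 ⟨x, ⟨hxC, hxU⟩, rfl⟩
  refine ⟨Gᶜ, hGcl.isOpen_compl, ?_, ?_⟩
  · obtain ⟨q, hq⟩ := mem_closure_iff.mp hpF Gᶜ hGcl.isOpen_compl hpG
    exact ⟨q, hq.1, hq.2⟩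
  · intro φ hφ ψ hψ
    obtain ⟨x, hx, rfl⟩ := hlift φ hφ
    obtain ⟨x', hx', rfl⟩ := hlift ψ hψ
    exact hkey _ _ (hUsmall x hx x' hx')

lemma dualBall_eq_polar (W : Type u) [NormedAddCommGroup W] [NormedSpace ℝ W] :
    dualBall W = WeakDual.polar ℝ (Metric.closedBall (0:W) 1) := by
  ext φ
  rw [WeakDual.polar_def]
  constructor
  · intro hφ x hx
    rw [Metric.mem_closedBall, dist_zero_right] at hx
    rw [Real.norm_eq_abs]
    exact (hφ x).trans hx
  · intro hφ x
    rcases eq_or_ne x 0 with rfl | hx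
    · simp
    · have hn : 0 < ‖x‖ := norm_pos_iff.mpr hx
      have h1 : ‖x‖⁻¹ • x ∈ Metric.closedBall (0:W) 1 := by
        rw [Metric.mem_closedBall, dist_zero_right, norm_smul, norm_inv, norm_norm]
        exact le_of_eq (inv_mul_cancel₀ hn.ne')
      have h2 := hφ _ h1
      rw [map_smul, smul_eq_mul, Real.norm_eq_abs, abs_mul, abs_inv, abs_norm] at h2
      rw [inv_mul_le_iff₀ hn, mul_one] at h2
      exact h2

lemma isCompact_dualBall (W : Type u) [NormedAddCommGroup W] [NormedSpace ℝ W] :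
    IsCompact (dualBall W) := by
  rw [dualBall_eq_polar]
  exact WeakDual.isCompact_polar ℝ (Metric.closedBall_mem_nhds 0 one_pos)

variable {W : Type u} [NormedAddCommGroup W] [NormedSpace ℝ W]

noncomputable def restr (V : Subspace ℝ W) (Φ : WeakDual ℝ W) : WeakDual ℝ ↥V :=
  ContinuousLinearMap.comp (show W →L[ℝ] ℝ from Φ) V.subtypeL

@[simp] lemma restr_apply (V : Subspace ℝ W) (Φ : WeakDual ℝ W) (v : ↥V) :
    restr V Φ v = Φ (v : W) := rfl

lemma restr_mem (V : Subspace ℝ W) {Φ : WeakDual ℝ W} (hΦ : Φ ∈ dualBall W) :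
    restr V Φ ∈ dualBall ↥V := by
  intro v
  rw [restr_apply]
  calc |Φ (v : W)| ≤ ‖(v : W)‖ := hΦ _
  _ = ‖v‖ := by rw [Submodule.norm_coe]

noncomputable def gmap (V : Subspace ℝ W) (Φ : ↥(dualBall W)) : ↥(dualBall ↥V) :=
  ⟨restr V Φ.1, restr_mem V Φ.2⟩

lemma gmap_continuous (V : Subspace ℝ W) : Continuous (gmap V) := by
  apply Continuous.subtype_mk
  apply WeakDual.continuous_of_continuous_eval
  intro v
  have h1 : Continuous fun Φ : WeakDual ℝ W => Φ (v : W) := WeakDual.eval_continuous _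
  exact h1.comp continuous_subtype_val

lemma gmap_surjective (V : Subspace ℝ W) : Function.Surjective (gmap V) := by
  rintro ⟨ψ, hψ⟩
  have hnorm : ‖(show ↥V →L[ℝ] ℝ from ψ)‖ ≤ 1 := by
    apply ContinuousLinearMap.opNorm_le_bound _ zero_le_one
    intro v
    rw [one_mul, Real.norm_eq_abs]
    exact hψ v
  obtain ⟨g, hg, hgnorm⟩ := exists_extension_norm_eq V (show ↥V →L[ℝ] ℝ from ψ)
  have hgball : (show WeakDual ℝ W from g) ∈ dualBall W := by
    intro x
    calc |g x| = ‖g x‖ := (Real.norm_eq_abs _).symm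
    _ ≤ ‖g‖ * ‖x‖ := g.le_opNorm x
    _ ≤ 1 * ‖x‖ := by
        apply mul_le_mul_of_nonneg_right _ (norm_nonneg x)
        rw [hgnorm]; exact hnorm
    _ = ‖x‖ := one_mul _
  refine ⟨⟨_, hgball⟩, ?_⟩
  apply Subtype.ext
  apply DFunLike.ext
  intro v
  simp only [gmap, restr_apply]
  exact hg v

end AuxForStatement9

/-- If `W` is an Asplund generated Banach space and `V` is a closed subspace of `W` of
density character less than `𝔟`, then `V` is Asplund generated. -/
theorem statement9 {W : Type u} [NormedAddCommGroup W] [NormedSpace ℝ W] [CompleteSpace W]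
    (hW : AsplundGenerated W)
    (V : Subspace ℝ W) (hVclosed : IsClosed (V : Set W))
    (hdens : densChar V < Cardinal.lift.{u} cardinalB) :
    AsplundGenerated V := by
  obtain ⟨N, hNb, hNsp, hNfr⟩ := hW
  -- a dense subset of minimal cardinality
  have hmem : densChar ↥V ∈ { c : Cardinal.{u} | ∃ s : Set ↥V, Dense s ∧ #s = c } :=
    csInf_mem ⟨#(univ : Set ↥V), univ, dense_univ, rfl⟩
  obtain ⟨D, hD, hDcard⟩ := hmem
  -- approximation by the span of N
  have hdense : ∀ x : W, ∀ r : ℝ, 0 < r → ∃ w ∈ Submodule.span ℝ N, ‖x - w‖ < r := by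
    intro x r hr
    have hdn : Dense ((Submodule.span ℝ N : Submodule ℝ W) : Set W) :=
      Submodule.dense_iff_topologicalClosure_eq_top.mpr hNsp
    obtain ⟨w, hw, hwd⟩ := Metric.mem_closure_iff.mp (hdn x) r hr
    exact ⟨w, hw, by rwa [dist_eq_norm] at hwd⟩
  have happrox : ∀ (d : ↥D) (n : ℕ), ∃ c : W →₀ ℝ, ↑c.support ⊆ N ∧
      ‖((d : ↥V) : W) - c.sum (fun i r => r • i)‖ < (2⁻¹ : ℝ) ^ n := by
    intro d n
    obtain ⟨w, hw, hwd⟩ := hdense ((d : ↥V) : W) ((2⁻¹:ℝ)^n) (by positivity)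
    obtain ⟨c, hc1, hc2⟩ := Submodule.mem_span_set.mp hw
    exact ⟨c, hc1, by rwa [hc2]⟩
  choose cd hcdsupp hcdnorm using happrox
  set σS : ↥D → ℕ → ℕ := fun d n => ⌈∑ i ∈ (cd d n).support, |cd d n i|⌉₊ with hσS
  -- σ-boundedness of the control functions
  have hSB : SigmaBounded (Set.range σS) := by
    by_contra hcon
    have h1 : cardinalB ≤ #(Set.range σS) := csInf_le' ⟨_, hcon, rfl⟩
    have h2 : lift.{u} #(Set.range σS) ≤ #↥D := by
      have h := Cardinal.mk_range_le_lift (f := σS)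
      rwa [Cardinal.lift_uzero] at h
    have h3 : Cardinal.lift.{u} cardinalB ≤ #↥D := (Cardinal.lift_le.mpr h1).trans h2
    exact absurd hdens (not_lt.mpr (h3.trans_eq hDcard))
  obtain ⟨B, hBcov, hBbd⟩ := hSB
  choose τ hτ using hBbd
  have hkex : ∀ d : ↥D, ∃ n, σS d ∈ B n := fun d => mem_iUnion.mp (hBcov (mem_range_self d))
  choose kk hkB using hkex
  -- the generating set
  set coef : ↥D → ℝ := fun d => (2⁻¹:ℝ)^(kk d) / (1 + ‖(d:↥V)‖) with hcoef
  have hden1 : ∀ d : ↥D, (0:ℝ) < 1 + ‖(d:↥V)‖ := fun d => by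
    have := norm_nonneg (d:↥V); linarith
  have hcoefpos : ∀ d, 0 < coef d := fun d => div_pos (by positivity) (hden1 d)
  have hcoefid : ∀ d, coef d * (1 + ‖(d:↥V)‖) = (2⁻¹:ℝ)^(kk d) := fun d =>
    div_mul_cancel₀ _ (hden1 d).ne'
  have hpowle1 : ∀ j : ℕ, ((2:ℝ)⁻¹)^j ≤ 1 := fun j =>
    pow_le_one₀ (by norm_num) (by norm_num)
  have hcoefle1 : ∀ d, coef d ≤ 1 := by
    intro d
    have h1 := hcoefid d
    have h2 := hpowle1 (kk d)
    have h3 := (hcoefpos d).le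
    have h4 := hden1 d
    nlinarith [norm_nonneg (d:↥V)]
  set mfun : ↥D → ↥V := fun d => coef d • (d : ↥V) with hmfun
  set M : Set ↥V := Set.range mfun with hM
  have hnm : ∀ d : ↥D, ‖mfun d‖ ≤ (2⁻¹:ℝ)^(kk d) := by
    intro d
    rw [hmfun]
    simp only [norm_smul, Real.norm_eq_abs, abs_of_pos (hcoefpos d)]
    calc coef d * ‖(d:↥V)‖ ≤ coef d * (1 + ‖(d:↥V)‖) := by
          apply mul_le_mul_of_nonneg_left _ (hcoefpos d).le
          linarith [norm_nonneg (d:↥V)]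
    _ = (2⁻¹:ℝ)^(kk d) := hcoefid d
  refine ⟨M, ?_, ?_, ?_⟩
  · -- bounded
    rw [isBounded_iff_forall_norm_le]
    refine ⟨1, ?_⟩
    rintro x hx
    have hx' : x ∈ Set.range mfun := by rwa [hM] at hx
    obtain ⟨d, rfl⟩ := hx'
    exact (hnm d).trans (hpowle1 _)
  · -- dense span
    rw [← Submodule.dense_iff_topologicalClosure_eq_top]
    have hsub : D ⊆ (Submodule.span ℝ M : Set ↥V) := by
      intro v hv
      have hmem' : mfun ⟨v, hv⟩ ∈ M := by rw [hM]; exact mem_range_self _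
      have hsp : mfun ⟨v, hv⟩ ∈ Submodule.span ℝ M := Submodule.subset_span hmem'
      have h := Submodule.smul_mem _ (coef ⟨v, hv⟩)⁻¹ hsp
      rw [hmfun] at h
      simp only [smul_smul, inv_mul_cancel₀ (hcoefpos ⟨v, hv⟩).ne', one_smul] at h
      exact h
    exact hD.mono hsub
  · -- fragmentation
    haveI : CompactSpace ↥(dualBall W) := isCompact_iff_compactSpace.mp (isCompact_dualBall W)
    apply fragments_of_quotient (gmap_continuous V) (gmap_surjective V) hNfr
    intro ε hε
    obtain ⟨R, hR⟩ := isBounded_iff_forall_norm_le.mp hNb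
    have hptw : ∀ (Φ Ψ : ↥(dualBall W)) (x : W), x ∈ N →
        |(Φ : WeakDual ℝ W) x - (Ψ : WeakDual ℝ W) x| ≤ dM N Φ Ψ := by
      intro Φ Ψ x hx
      have hbdd : BddAbove (Set.range fun y : ↥N =>
          |(Φ : WeakDual ℝ W) ↑y - (Ψ : WeakDual ℝ W) ↑y|) := by
        refine ⟨R + R, ?_⟩
        rintro r ⟨y, rfl⟩
        calc |(Φ : WeakDual ℝ W) ↑y - (Ψ : WeakDual ℝ W) ↑y|
            ≤ |(Φ : WeakDual ℝ W) ↑y| + |(Ψ : WeakDual ℝ W) ↑y| := abs_sub _ _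
        _ ≤ ‖(y:W)‖ + ‖(y:W)‖ := add_le_add (Φ.2 _) (Ψ.2 _)
        _ ≤ R + R := add_le_add (hR _ y.2) (hR _ y.2)
      exact le_ciSup hbdd (⟨x, hx⟩ : ↥N)
    obtain ⟨n, hn⟩ := exists_pow_lt_of_lt_one (show (0:ℝ) < ε/8 by linarith)
      (by norm_num : (2⁻¹:ℝ) < 1)
    obtain ⟨K, hK⟩ := exists_pow_lt_of_lt_one (show (0:ℝ) < ε/4 by linarith)
      (by norm_num : (2⁻¹:ℝ) < 1)
    set T : ℕ := (Finset.range (K+1)).sup (fun j => τ j n) with hT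
    set δ : ℝ := (ε/4)/((T:ℝ)+1) with hδdef
    have hT1 : (0:ℝ) < (T:ℝ)+1 := by positivity
    have hδpos : (0:ℝ) < δ := by rw [hδdef]; positivity
    have hδid : ((T:ℝ)+1) * δ = ε/4 := by rw [hδdef]; field_simp
    refine ⟨δ, hδpos, ?_⟩
    intro Φ Ψ hΦΨ
    have hmain : ∀ m : ↥M, |((gmap V Φ : ↥(dualBall ↥V)) : WeakDual ℝ ↥V) (m : ↥V) -
        ((gmap V Ψ : ↥(dualBall ↥V)) : WeakDual ℝ ↥V) (m : ↥V)| ≤ ε/2 := by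
      intro m
      have hm' : (m : ↥V) ∈ Set.range mfun := m.2
      obtain ⟨d, hd⟩ := hm'
      have hvΦ : ((gmap V Φ : ↥(dualBall ↥V)) : WeakDual ℝ ↥V) (m : ↥V)
          = (Φ : WeakDual ℝ W) ((m : ↥V) : W) := rfl
      have hvΨ : ((gmap V Ψ : ↥(dualBall ↥V)) : WeakDual ℝ ↥V) (m : ↥V)
          = (Ψ : WeakDual ℝ W) ((m : ↥V) : W) := rfl
      rw [hvΦ, hvΨ]
      have hmW : ((m : ↥V) : W) = coef d • ((d : ↥V) : W) := by
        rw [← hd, hmfun]; rfl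
      rcases le_or_gt (kk d) K with hkd | hkd
      · -- main case : k d ≤ K
        have habs : |(Φ : WeakDual ℝ W) ((m : ↥V) : W) - (Ψ : WeakDual ℝ W) ((m : ↥V) : W)|
            = coef d * |(Φ : WeakDual ℝ W) ((d:↥V):W) - (Ψ : WeakDual ℝ W) ((d:↥V):W)| := by
          rw [hmW, map_smul, map_smul, smul_eq_mul, smul_eq_mul, ← mul_sub, abs_mul,
            abs_of_pos (hcoefpos d)]
        rw [habs]
        set x : W := ((d:↥V) : W) with hxdef
        set w : W := (cd d n).sum (fun i r => r • i) with hwdef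
        have hw' : w = ∑ i ∈ (cd d n).support, cd d n i • i := rfl
        have h1 : |(Φ : WeakDual ℝ W) x - (Φ : WeakDual ℝ W) w| ≤ (2⁻¹:ℝ)^n := by
          rw [← map_sub]
          exact (Φ.2 _).trans (hcdnorm d n).le
        have h2 : |(Ψ : WeakDual ℝ W) w - (Ψ : WeakDual ℝ W) x| ≤ (2⁻¹:ℝ)^n := by
          rw [← map_sub]
          calc |(Ψ : WeakDual ℝ W) (w - x)| ≤ ‖w - x‖ := Ψ.2 _
          _ = ‖x - w‖ := norm_sub_rev _ _
          _ ≤ (2⁻¹:ℝ)^n := (hcdnorm d n).le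
        have h3 : |(Φ : WeakDual ℝ W) w - (Ψ : WeakDual ℝ W) w| ≤ (σS d n : ℝ) * δ := by
          have hΦw : (Φ : WeakDual ℝ W) w
              = ∑ i ∈ (cd d n).support, cd d n i * (Φ : WeakDual ℝ W) i := by
            rw [hw', map_sum]
            exact Finset.sum_congr rfl fun i _ => by rw [map_smul, smul_eq_mul]
          have hΨw : (Ψ : WeakDual ℝ W) w
              = ∑ i ∈ (cd d n).support, cd d n i * (Ψ : WeakDual ℝ W) i := by
            rw [hw', map_sum]
            exact Finset.sum_congr rfl fun i _ => by rw [map_smul, smul_eq_mul]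
          rw [hΦw, hΨw, ← Finset.sum_sub_distrib]
          calc |∑ i ∈ (cd d n).support,
                (cd d n i * (Φ : WeakDual ℝ W) i - cd d n i * (Ψ : WeakDual ℝ W) i)|
              ≤ ∑ i ∈ (cd d n).support,
                |cd d n i * (Φ : WeakDual ℝ W) i - cd d n i * (Ψ : WeakDual ℝ W) i| :=
                Finset.abs_sum_le_sum_abs _ _
          _ = ∑ i ∈ (cd d n).support,
                |cd d n i| * |(Φ : WeakDual ℝ W) i - (Ψ : WeakDual ℝ W) i| := by
                refine Finset.sum_congr rfl fun i _ => ?_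
                rw [← mul_sub, abs_mul]
          _ ≤ ∑ i ∈ (cd d n).support, |cd d n i| * δ := by
                refine Finset.sum_le_sum fun i hi => ?_
                exact mul_le_mul_of_nonneg_left
                  ((hptw Φ Ψ i (hcdsupp d n hi)).trans hΦΨ.le) (abs_nonneg _)
          _ = (∑ i ∈ (cd d n).support, |cd d n i|) * δ := (Finset.sum_mul _ _ _).symm
          _ ≤ (σS d n : ℝ) * δ := by
                apply mul_le_mul_of_nonneg_right _ hδpos.le
                rw [hσS]
                exact Nat.le_ceil _
        have hσT : (σS d n : ℝ) ≤ (T:ℝ) := by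
          have ha : σS d ≤ τ (kk d) := hτ (kk d) _ (hkB d)
          have hb : τ (kk d) n ≤ T := by
            rw [hT]
            exact Finset.le_sup (f := fun j => τ j n)
              (Finset.mem_range.mpr (Nat.lt_succ_of_le hkd))
          exact_mod_cast (ha n).trans hb
        have hσδ : (σS d n : ℝ) * δ ≤ ε/4 := by
          calc (σS d n : ℝ) * δ ≤ ((T:ℝ)+1) * δ := by
                apply mul_le_mul_of_nonneg_right _ hδpos.le
                linarith
          _ = ε/4 := hδid
        have hA : |(Φ : WeakDual ℝ W) x - (Ψ : WeakDual ℝ W) x| ≤ ε/2 := by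
          have htri : |(Φ : WeakDual ℝ W) x - (Ψ : WeakDual ℝ W) x|
              ≤ |(Φ : WeakDual ℝ W) x - (Φ : WeakDual ℝ W) w|
                + |(Φ : WeakDual ℝ W) w - (Ψ : WeakDual ℝ W) w|
                + |(Ψ : WeakDual ℝ W) w - (Ψ : WeakDual ℝ W) x| := by
            calc |(Φ : WeakDual ℝ W) x - (Ψ : WeakDual ℝ W) x|
                ≤ |(Φ : WeakDual ℝ W) x - (Ψ : WeakDual ℝ W) w|
                  + |(Ψ : WeakDual ℝ W) w - (Ψ : WeakDual ℝ W) x| := abs_sub_le _ _ _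
            _ ≤ |(Φ : WeakDual ℝ W) x - (Φ : WeakDual ℝ W) w|
                  + |(Φ : WeakDual ℝ W) w - (Ψ : WeakDual ℝ W) w|
                  + |(Ψ : WeakDual ℝ W) w - (Ψ : WeakDual ℝ W) x| := by
                have := abs_sub_le ((Φ : WeakDual ℝ W) x) ((Φ : WeakDual ℝ W) w)
                  ((Ψ : WeakDual ℝ W) w)
                linarith
          have h2n : (2⁻¹:ℝ)^n ≤ ε/8 := hn.le
          linarith
        calc coef d * |(Φ : WeakDual ℝ W) x - (Ψ : WeakDual ℝ W) x|
            ≤ 1 * |(Φ : WeakDual ℝ W) x - (Ψ : WeakDual ℝ W) x| :=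
              mul_le_mul_of_nonneg_right (hcoefle1 d) (abs_nonneg _)
        _ = |(Φ : WeakDual ℝ W) x - (Ψ : WeakDual ℝ W) x| := one_mul _
        _ ≤ ε/2 := hA
      · -- tail case : K < kk d
        have h1 : |(Φ : WeakDual ℝ W) ((m:↥V):W) - (Ψ : WeakDual ℝ W) ((m:↥V):W)|
            ≤ ‖((m:↥V):W)‖ + ‖((m:↥V):W)‖ :=
          (abs_sub _ _).trans (add_le_add (Φ.2 _) (Ψ.2 _))
        have h2 : ‖((m:↥V):W)‖ ≤ (2⁻¹:ℝ)^(kk d) := by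
          rw [Submodule.norm_coe]
          have : (m : ↥V) = mfun d := hd.symm
          rw [this]
          exact hnm d
        have h3 : (2⁻¹:ℝ)^(kk d) ≤ (2⁻¹:ℝ)^K :=
          pow_le_pow_of_le_one (by norm_num) (by norm_num) hkd.le
        linarith
    have hsup : dM M (gmap V Φ) (gmap V Ψ) ≤ ε/2 := Real.iSup_le hmain (by linarith)
    linarith
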